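/- Under the same assumptions as the previous statement (Jost solutions $f^\pm$ with $W(\overline{f^+},f^+) = W(f^-,\overline{f^-}) = 2i\sigma$, $\sigma>0$, and $f^- = af^+ + b\overline{f^+}$), the Wronskian satisfies $W(f^-, f^+) = 2i\sigma\, b$, and consequently $|W(f^-,f^+)| \geq 2\sigma$. -/

import Mathlib

/-- Under the same assumptions as the previous statement, the Wronskian of the Jost
solutions satisfies `W(f⁻, f⁺) = 2iσ b`, and consequently `|W(f⁻, f⁺)| ≥ 2σ`. -/
theorem wronskian_lower_bound (V : ℝ → ℝ) (hV : Continuous V)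
    (σ : ℝ) (hσ : 0 < σ) (fp fm : ℝ → ℂ)
    (hfp : ContDiff ℝ 2 fp) (hfm : ContDiff ℝ 2 fm)
    (hep : ∀ x, -(deriv (deriv fp) x) + (V x : ℂ) * fp x = (σ:ℂ)^2 * fp x)
    (hem : ∀ x, -(deriv (deriv fm) x) + (V x : ℂ) * fm x = (σ:ℂ)^2 * fm x)
    (hWp : ∀ x, (starRingEnd ℂ) (fp x) * deriv fp x
        - (starRingEnd ℂ) (deriv fp x) * fp x = 2 * Complex.I * σ)
    (hWm : ∀ x, fm x * (starRingEnd ℂ) (deriv fm x)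
        - deriv fm x * (starRingEnd ℂ) (fm x) = 2 * Complex.I * σ)
    (a b : ℂ) (hab : ∀ x, fm x = a * fp x + b * (starRingEnd ℂ) (fp x)) :
    (∀ x, fm x * deriv fp x - deriv fm x * fp x = 2 * Complex.I * σ * b) ∧
    (∀ x, 2 * σ ≤ ‖fm x * deriv fp x - deriv fm x * fp x‖) := by
  have hdfp : ∀ x, HasDerivAt fp (deriv fp x) x := fun x =>
    ((hfp.differentiable (by norm_num)) x).hasDerivAt
  have hdm : ∀ x, deriv fm x = a * deriv fp x + b * (starRingEnd ℂ) (deriv fp x) := by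
    intro x
    have h : HasDerivAt fm (a * deriv fp x + b * (starRingEnd ℂ) (deriv fp x)) x := by
      have := ((hdfp x).const_mul a).add (((hdfp x).star).const_mul b)
      exact (funext hab : fm = _) ▸ this
    exact h.deriv
  have hIσ : (2 : ℂ) * Complex.I * σ ≠ 0 := by
    simp [Complex.ext_iff, hσ.ne']
  have key : b * (starRingEnd ℂ) b - a * (starRingEnd ℂ) a = 1 := by
    have h1 := hWm 0
    rw [hab 0, hdm 0] at h1
    simp only [map_add, map_mul, Complex.conj_conj] at h1
    have h2 := hWp 0
    have h3 : (b * (starRingEnd ℂ) b - a * (starRingEnd ℂ) a) * (2 * Complex.I * σ)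
        = 1 * (2 * Complex.I * σ) := by
      linear_combination h1 - (b * (starRingEnd ℂ) b - a * (starRingEnd ℂ) a) * h2
    exact mul_right_cancel₀ hIσ h3
  have hW : ∀ x, fm x * deriv fp x - deriv fm x * fp x = 2 * Complex.I * σ * b := by
    intro x
    rw [hab x, hdm x]
    linear_combination b * hWp x
  refine ⟨hW, fun x => ?_⟩
  rw [hW x]
  have hb : 1 ≤ ‖b‖ := by
    have h5 : Complex.normSq b - Complex.normSq a = 1 := by
      have h4 := key
      rw [Complex.mul_conj, Complex.mul_conj] at h4
      exact_mod_cast h4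
    nlinarith [Complex.sq_norm b, norm_nonneg b, Complex.normSq_nonneg a, h5]
  have : ‖2 * Complex.I * σ * b‖ = 2 * σ * ‖b‖ := by
    simp [map_mul, abs_of_pos hσ]; try ring
  rw [this]
  nlinarith
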